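/- For every integer h ≥ 1 there exists a closed squared spiral w : ZMod (6h) → ℤ² on 6h vertices that is a curl whose turn-sign sequence consists of exactly 2h maximal runs of consecutive equally-oriented vertices, each run of length 3 (hv-sequence (3,3)_h), and whose associated pair (S⁰, S¹) is an hv-convex switching. -/

import Mathlib

/-- The four quadrant regions `Z_i(v)` in `ℤ²`. -/
def Zq (i : Fin 4) (v : ℤ × ℤ) : Set (ℤ × ℤ) :=
  match i with
  | 0 => {p | p.1 ≤ v.1 ∧ p.2 ≤ v.2}
  | 1 => {p | v.1 ≤ p.1 ∧ p.2 ≤ v.2}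
  | 2 => {p | v.1 ≤ p.1 ∧ v.2 ≤ p.2}
  | 3 => {p | p.1 ≤ v.1 ∧ v.2 ≤ p.2}

/-- Horizontal projection: the number of points of `S` on the horizontal line `y = c`. -/
noncomputable def hProj (S : Set (ℤ × ℤ)) (c : ℤ) : ℕ := {p ∈ S | p.2 = c}.ncard

/-- Vertical projection: the number of points of `S` on the vertical line `x = c`. -/
noncomputable def vProj (S : Set (ℤ × ℤ)) (c : ℤ) : ℕ := {p ∈ S | p.1 = c}.ncard

/-- An hv-switching: a pair of disjoint finite sets of equal cardinality having the same
horizontal and vertical projections. -/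
def IsHvSwitching (S0 S1 : Set (ℤ × ℤ)) : Prop :=
  S0.Finite ∧ S1.Finite ∧ Disjoint S0 S1 ∧ S0.ncard = S1.ncard ∧
    (∀ c : ℤ, hProj S0 c = hProj S1 c) ∧ (∀ c : ℤ, vProj S0 c = vProj S1 c)

/-- An hv-convex switching: an hv-switching in which every point has a free region,
i.e. a quadrant containing no point of the other component. -/
def IsHvConvexSwitching (S0 S1 : Set (ℤ × ℤ)) : Prop :=
  IsHvSwitching S0 S1 ∧ (∀ x ∈ S0, ∃ i : Fin 4, Zq i x ∩ S1 = ∅) ∧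
    (∀ x ∈ S1, ∃ i : Fin 4, Zq i x ∩ S0 = ∅)

/-- A closed squared spiral on `m` vertices: an injective closed lattice path whose
segments are alternately horizontal (from even-indexed vertices) and vertical
(from odd-indexed vertices). -/
structure IsClosedSquaredSpiral {m : ℕ} (w : ZMod m → ℤ × ℤ) : Prop where
  even_m : Even m
  four_le : 4 ≤ m
  inj : Function.Injective w
  horiz : ∀ i : ZMod m, Even i.val → (w (i + 1)).2 = (w i).2 ∧ (w (i + 1)).1 ≠ (w i).1
  vert : ∀ i : ZMod m, ¬ Even i.val → (w (i + 1)).1 = (w i).1 ∧ (w (i + 1)).2 ≠ (w i).2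

/-- The turn `d(i) = u₁v₂ − u₂v₁` at vertex `i`, where `u = w i − w (i−1)` and
`v = w (i+1) − w i`. -/
def turn {m : ℕ} (w : ZMod m → ℤ × ℤ) (i : ZMod m) : ℤ :=
  ((w i).1 - (w (i - 1)).1) * ((w (i + 1)).2 - (w i).2)
    - ((w i).2 - (w (i - 1)).2) * ((w (i + 1)).1 - (w i).1)

/-- A window: a squared spiral all of whose turns have the same sign. -/
def IsWindow {m : ℕ} (w : ZMod m → ℤ × ℤ) : Prop :=
  (∀ i : ZMod m, 0 < turn w i) ∨ (∀ i : ZMod m, turn w i < 0)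

/-- The even-indexed vertices of a spiral. -/
def spiralEven {m : ℕ} (w : ZMod m → ℤ × ℤ) : Set (ℤ × ℤ) := w '' {i | Even i.val}

/-- The odd-indexed vertices of a spiral. -/
def spiralOdd {m : ℕ} (w : ZMod m → ℤ × ℤ) : Set (ℤ × ℤ) := w '' {i | ¬ Even i.val}


def ptk (j k : ℕ) : ℤ × ℤ :=
  if k = 0 then (0, -(j:ℤ))
  else if k = 1 then ((j:ℤ)+1, -(j:ℤ))
  else if k = 2 then ((j:ℤ)+1, 1)
  else if k = 3 then (-((j:ℤ)+1), 1)
  else if k = 4 then (-((j:ℤ)+1), (j:ℤ)+2)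
  else (0, (j:ℤ)+2)

def ws (h : ℕ) (i : ZMod (6*h)) : ℤ × ℤ := ptk (i.val/6) (i.val%6)

lemma ws_coords (h : ℕ) (i : ZMod (6*h)) (j k : ℕ) (hv : i.val = 6*j+k) (hk : k < 6) :
    ws h i = ptk j k := by
  unfold ws; congr 1 <;> omega

lemma val_succ {h : ℕ} (hh : 1 ≤ h) (i : ZMod (6*h)) :
    (i+1).val = if i.val = 6*h - 1 then 0 else i.val + 1 := by
  haveI : NeZero (6*h) := ⟨by omega⟩
  have hv : i.val < 6*h := ZMod.val_lt i
  have h1 : (1 : ZMod (6*h)) = ((1:ℕ) : ZMod (6*h)) := by norm_cast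
  rw [h1, ZMod.val_add, ZMod.val_natCast, Nat.mod_eq_of_lt (by omega : 1 < 6*h)]
  split_ifs with hc
  · rw [show i.val + 1 = 6*h by omega, Nat.mod_self]
  · exact Nat.mod_eq_of_lt (by omega)

lemma val_pred {h : ℕ} (hh : 1 ≤ h) (i : ZMod (6*h)) :
    (i-1).val = if i.val = 0 then 6*h - 1 else i.val - 1 := by
  haveI : NeZero (6*h) := ⟨by omega⟩
  have hv : i.val < 6*h := ZMod.val_lt i
  have hm : i - 1 = i + ((6*h-1 : ℕ) : ZMod (6*h)) := by
    have : ((6*h-1 : ℕ) : ZMod (6*h)) = -1 := by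
      rw [Nat.cast_sub (by omega : 1 ≤ 6*h), Nat.cast_one, ZMod.natCast_self, zero_sub]
    rw [this]; ring
  rw [hm, ZMod.val_add, ZMod.val_natCast, Nat.mod_eq_of_lt (by omega : 6*h-1 < 6*h)]
  split_ifs with hc
  · rw [hc, zero_add]; exact Nat.mod_eq_of_lt (by omega)
  · rw [show i.val + (6*h-1) = 6*h + (i.val - 1) by omega, Nat.add_mod_left]
    exact Nat.mod_eq_of_lt (by omega)

lemma val_add_nat {h : ℕ} (hh : 1 ≤ h) (i : ZMod (6*h)) (k : ℕ) :
    (i + (k : ZMod (6*h))).val = (i.val + k) % (6*h) := by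
  haveI : NeZero (6*h) := ⟨by omega⟩
  rw [ZMod.val_add, ZMod.val_natCast]
  conv_rhs => rw [Nat.add_mod]
  rw [Nat.mod_eq_of_lt (ZMod.val_lt i)]

lemma turn_sign {h : ℕ} (hh : 1 ≤ h) (i : ZMod (6*h)) :
    (i.val % 6 < 3 → 0 < turn (ws h) i) ∧ (3 ≤ i.val % 6 → turn (ws h) i < 0) := by
  haveI : NeZero (6*h) := ⟨by omega⟩
  have hv : i.val < 6*h := ZMod.val_lt i
  have hp := val_pred hh i
  have hs := val_succ hh i
  set v := i.val with hvdef
  set j := v / 6 with hjdef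
  have hk6 : v % 6 = 0 ∨ v % 6 = 1 ∨ v % 6 = 2 ∨ v % 6 = 3 ∨ v % 6 = 4 ∨ v % 6 = 5 := by omega
  have hjz : (0:ℤ) ≤ (j:ℤ) := Int.ofNat_nonneg j
  rcases hk6 with hk|hk|hk|hk|hk|hk
  · -- k = 0
    have c1 : ws h i = ptk j 0 := ws_coords h i j 0 (by omega) (by omega)
    have c2 : ws h (i+1) = ptk j 1 := ws_coords h (i+1) j 1 (by rw [hs]; split_ifs with hc <;> omega) (by omega)
    refine ⟨fun _ => ?_, fun hc => absurd hc (by omega)⟩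
    rcases Nat.eq_zero_or_pos v with hz|hz
    · have c0 : ws h (i-1) = ptk (h-1) 5 := ws_coords h (i-1) (h-1) 5 (by rw [hp]; simp [hz]; omega) (by omega)
      unfold turn
      rw [c0, c1, c2]
      simp only [ptk]
      norm_num
      push_cast
      nlinarith [hjz, Int.ofNat_nonneg (h-1)]
    · have c0 : ws h (i-1) = ptk (j-1) 5 := ws_coords h (i-1) (j-1) 5 (by rw [hp]; split_ifs <;> omega) (by omega)
      unfold turn
      rw [c0, c1, c2]
      simp only [ptk]
      norm_num
      push_cast [Nat.cast_sub (by omega : 1 ≤ j)]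
      nlinarith [hjz]
  · -- k = 1
    have c0 : ws h (i-1) = ptk j 0 := ws_coords h (i-1) j 0 (by rw [hp]; split_ifs <;> omega) (by omega)
    have c1 : ws h i = ptk j 1 := ws_coords h i j 1 (by omega) (by omega)
    have c2 : ws h (i+1) = ptk j 2 := ws_coords h (i+1) j 2 (by rw [hs]; split_ifs <;> omega) (by omega)
    refine ⟨fun _ => ?_, fun hc => absurd hc (by omega)⟩
    unfold turn; rw [c0, c1, c2]; simp only [ptk]; norm_num; push_cast; nlinarith [hjz]
  · -- k = 2
    have c0 : ws h (i-1) = ptk j 1 := ws_coords h (i-1) j 1 (by rw [hp]; split_ifs <;> omega) (by omega)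
    have c1 : ws h i = ptk j 2 := ws_coords h i j 2 (by omega) (by omega)
    have c2 : ws h (i+1) = ptk j 3 := ws_coords h (i+1) j 3 (by rw [hs]; split_ifs <;> omega) (by omega)
    refine ⟨fun _ => ?_, fun hc => absurd hc (by omega)⟩
    unfold turn; rw [c0, c1, c2]; simp only [ptk]; norm_num; push_cast; nlinarith [hjz]
  · -- k = 3
    have c0 : ws h (i-1) = ptk j 2 := ws_coords h (i-1) j 2 (by rw [hp]; split_ifs <;> omega) (by omega)
    have c1 : ws h i = ptk j 3 := ws_coords h i j 3 (by omega) (by omega)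
    have c2 : ws h (i+1) = ptk j 4 := ws_coords h (i+1) j 4 (by rw [hs]; split_ifs <;> omega) (by omega)
    refine ⟨fun hc => absurd hc (by omega), fun _ => ?_⟩
    unfold turn; rw [c0, c1, c2]; simp only [ptk]; norm_num; push_cast; nlinarith [hjz]
  · -- k = 4
    have c0 : ws h (i-1) = ptk j 3 := ws_coords h (i-1) j 3 (by rw [hp]; split_ifs <;> omega) (by omega)
    have c1 : ws h i = ptk j 4 := ws_coords h i j 4 (by omega) (by omega)
    have c2 : ws h (i+1) = ptk j 5 := ws_coords h (i+1) j 5 (by rw [hs]; split_ifs <;> omega) (by omega)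
    refine ⟨fun hc => absurd hc (by omega), fun _ => ?_⟩
    unfold turn; rw [c0, c1, c2]; simp only [ptk]; norm_num; push_cast; nlinarith [hjz]
  · -- k = 5
    have c0 : ws h (i-1) = ptk j 4 := ws_coords h (i-1) j 4 (by rw [hp]; split_ifs <;> omega) (by omega)
    have c1 : ws h i = ptk j 5 := ws_coords h i j 5 (by omega) (by omega)
    refine ⟨fun hc => absurd hc (by omega), fun _ => ?_⟩
    rcases Nat.lt_or_ge v (6*h-1) with hlt|hge
    · have c2 : ws h (i+1) = ptk (j+1) 0 := ws_coords h (i+1) (j+1) 0 (by rw [hs]; split_ifs <;> omega) (by omega)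
      unfold turn; rw [c0, c1, c2]; simp only [ptk]; norm_num; push_cast; nlinarith [hjz]
    · have c2 : ws h (i+1) = ptk 0 0 := ws_coords h (i+1) 0 0 (by rw [hs]; split_ifs <;> omega) (by omega)
      unfold turn; rw [c0, c1, c2]; simp only [ptk]; norm_num; push_cast; nlinarith [hjz]

lemma ptk_inj (j1 k1 j2 k2 : ℕ) (h1 : k1 < 6) (h2 : k2 < 6)
    (he : ptk j1 k1 = ptk j2 k2) : j1 = j2 ∧ k1 = k2 := by
  interval_cases k1 <;> interval_cases k2 <;>
    simp [ptk, Prod.ext_iff] at he <;> omega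

lemma ws_inj {h : ℕ} (hh : 1 ≤ h) : Function.Injective (ws h) := by
  haveI : NeZero (6*h) := ⟨by omega⟩
  intro i1 i2 he
  apply ZMod.val_injective
  have e1 : ws h i1 = ptk (i1.val/6) (i1.val%6) := rfl
  have e2 : ws h i2 = ptk (i2.val/6) (i2.val%6) := rfl
  rw [e1, e2] at he
  obtain ⟨hj, hk⟩ := ptk_inj _ _ _ _ (by omega) (by omega) he
  omega

lemma horiz_lem {h : ℕ} (hh : 1 ≤ h) (i : ZMod (6*h)) (hei : Even i.val) :
    (ws h (i + 1)).2 = (ws h i).2 ∧ (ws h (i + 1)).1 ≠ (ws h i).1 := by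
  haveI : NeZero (6*h) := ⟨by omega⟩
  have hv : i.val < 6*h := ZMod.val_lt i
  have hei' : i.val % 2 = 0 := Nat.even_iff.1 hei
  have hs : (i+1).val = i.val + 1 := by
    rw [val_succ hh]; split_ifs with hc <;> omega
  have hk : i.val % 6 = 0 ∨ i.val % 6 = 2 ∨ i.val % 6 = 4 := by omega
  rcases hk with hk|hk|hk
  · rw [ws_coords h i (i.val/6) 0 (by omega) (by omega),
      ws_coords h (i+1) (i.val/6) 1 (by omega) (by omega)]
    generalize i.val / 6 = j
    constructor <;> simp only [ptk] <;> norm_num <;> omega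
  · rw [ws_coords h i (i.val/6) 2 (by omega) (by omega),
      ws_coords h (i+1) (i.val/6) 3 (by omega) (by omega)]
    generalize i.val / 6 = j
    constructor <;> simp only [ptk] <;> norm_num <;> omega
  · rw [ws_coords h i (i.val/6) 4 (by omega) (by omega),
      ws_coords h (i+1) (i.val/6) 5 (by omega) (by omega)]
    generalize i.val / 6 = j
    constructor <;> simp only [ptk] <;> norm_num <;> omega

lemma vert_lem {h : ℕ} (hh : 1 ≤ h) (i : ZMod (6*h)) (hei : ¬ Even i.val) :
    (ws h (i + 1)).1 = (ws h i).1 ∧ (ws h (i + 1)).2 ≠ (ws h i).2 := by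
  haveI : NeZero (6*h) := ⟨by omega⟩
  have hv : i.val < 6*h := ZMod.val_lt i
  have hei' : i.val % 2 = 1 := Nat.odd_iff.1 (Nat.not_even_iff_odd.1 hei)
  have hs := val_succ hh i
  have hk : i.val % 6 = 1 ∨ i.val % 6 = 3 ∨ i.val % 6 = 5 := by omega
  rcases hk with hk|hk|hk
  · rw [ws_coords h i (i.val/6) 1 (by omega) (by omega),
      ws_coords h (i+1) (i.val/6) 2 (by rw [hs]; split_ifs <;> omega) (by omega)]
    generalize i.val / 6 = j
    constructor <;> simp only [ptk] <;> norm_num <;> omega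
  · rw [ws_coords h i (i.val/6) 3 (by omega) (by omega),
      ws_coords h (i+1) (i.val/6) 4 (by rw [hs]; split_ifs <;> omega) (by omega)]
    generalize i.val / 6 = j
    constructor <;> simp only [ptk] <;> norm_num <;> omega
  · rcases Nat.lt_or_ge i.val (6*h-1) with hlt|hge
    · rw [ws_coords h i (i.val/6) 5 (by omega) (by omega),
        ws_coords h (i+1) (i.val/6+1) 0 (by rw [hs]; split_ifs <;> omega) (by omega)]
      generalize i.val / 6 = j
      constructor <;> simp only [ptk] <;> norm_num <;> omega
    · rw [ws_coords h i (i.val/6) 5 (by omega) (by omega),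
        ws_coords h (i+1) 0 0 (by rw [hs]; split_ifs <;> omega) (by omega)]
      generalize i.val / 6 = j
      constructor <;> simp only [ptk] <;> norm_num <;> omega

lemma parity_succ {h : ℕ} (hh : 1 ≤ h) (i : ZMod (6*h)) :
    Even (i+1).val ↔ ¬ Even i.val := by
  haveI : NeZero (6*h) := ⟨by omega⟩
  have hv : i.val < 6*h := ZMod.val_lt i
  rw [val_succ hh, Nat.even_iff, Nat.even_iff]
  split_ifs with hc <;> omega

lemma parity_pred {h : ℕ} (hh : 1 ≤ h) (i : ZMod (6*h)) :
    Even (i-1).val ↔ ¬ Even i.val := by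
  haveI : NeZero (6*h) := ⟨by omega⟩
  have hv : i.val < 6*h := ZMod.val_lt i
  rw [val_pred hh, Nat.even_iff, Nat.even_iff]
  split_ifs with hc <;> omega

lemma key_neg {h : ℕ} (hh : 1 ≤ h) (b c : ZMod (6*h))
    (hbc : turn (ws h) b * turn (ws h) c < 0) :
    ((b.val % 6 < 3) ↔ ¬(c.val % 6 < 3)) := by
  rcases Nat.lt_or_ge (b.val % 6) 3 with hb|hb <;> rcases Nat.lt_or_ge (c.val % 6) 3 with hc|hc
  · have := mul_pos ((turn_sign hh b).1 hb) ((turn_sign hh c).1 hc); linarith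
  · omega
  · omega
  · have := mul_pos_of_neg_of_neg ((turn_sign hh b).2 hb) ((turn_sign hh c).2 hc); linarith

lemma key_pos {h : ℕ} (hh : 1 ≤ h) (b c : ZMod (6*h))
    (hbc : 0 < turn (ws h) b * turn (ws h) c) :
    ((b.val % 6 < 3) ↔ (c.val % 6 < 3)) := by
  rcases Nat.lt_or_ge (b.val % 6) 3 with hb|hb <;> rcases Nat.lt_or_ge (c.val % 6) 3 with hc|hc
  · omega
  · have := mul_neg_of_pos_of_neg ((turn_sign hh b).1 hb) ((turn_sign hh c).2 hc); linarith
  · have := mul_neg_of_neg_of_pos ((turn_sign hh b).2 hb) ((turn_sign hh c).1 hc); linarith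
  · omega

lemma run_three {h : ℕ} (hh : 1 ≤ h) (a : ZMod (6*h)) (L : ℕ) (hL1 : 1 ≤ L) (hL2 : L < 6*h)
    (hsame : ∀ k : ℕ, k < L → 0 < turn (ws h) (a + (k : ZMod (6*h))) * turn (ws h) a)
    (hprev : turn (ws h) (a - 1) * turn (ws h) a < 0)
    (hnext : turn (ws h) (a + (L : ZMod (6*h))) * turn (ws h) a < 0) : L = 3 := by
  haveI : NeZero (6*h) := ⟨by omega⟩
  have hv : a.val < 6*h := ZMod.val_lt a
  have hdvd : (6 : ℕ) ∣ 6*h := ⟨h, rfl⟩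
  have hp6 : (a-1).val % 6 = (a.val + 5) % 6 := by
    rw [val_pred hh]; split_ifs with hc
    · omega
    · omega
  have hn6 : (a + (L : ZMod (6*h))).val % 6 = (a.val + L) % 6 := by
    rw [val_add_nat hh, Nat.mod_mod_of_dvd _ hdvd]
  have f1 := key_neg hh _ _ hprev
  rw [hp6] at f1
  have f2 := key_neg hh _ _ hnext
  rw [hn6] at f2
  rcases Nat.lt_or_ge L 4 with h4|h4
  · omega
  · exfalso
    have f3 := key_pos hh _ _ (hsame 3 (by omega))
    rw [val_add_nat hh, Nat.mod_mod_of_dvd _ hdvd] at f3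
    omega

lemma not_window {h : ℕ} (hh : 1 ≤ h) : ¬ IsWindow (ws h) := by
  haveI : NeZero (6*h) := ⟨by omega⟩
  intro hw
  have hval1 : (((1:ℕ) : ZMod (6*h))).val = 1 := by
    rw [ZMod.val_natCast, Nat.mod_eq_of_lt (by omega)]
  have hval3 : (((3:ℕ) : ZMod (6*h))).val = 3 := by
    rw [ZMod.val_natCast, Nat.mod_eq_of_lt (by omega)]
  have hpos := (turn_sign hh ((1:ℕ) : ZMod (6*h))).1 (by rw [hval1]; omega)
  have hneg := (turn_sign hh ((3:ℕ) : ZMod (6*h))).2 (by rw [hval3])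
  rcases hw with hw|hw
  · have := hw (((3:ℕ)) : ZMod (6*h)); linarith
  · have := hw (((1:ℕ)) : ZMod (6*h)); linarith

lemma shift_even {h : ℕ} (hh : 1 ≤ h) (P : ℤ × ℤ → Prop) (hP : ∀ i : ZMod (6*h), Even i.val → (P (ws h (i+1)) ↔ P (ws h i))) :
    (fun i : ZMod (6*h) => i + 1) '' {i | Even i.val ∧ P (ws h i)} = {i | ¬ Even i.val ∧ P (ws h i)} := by
  ext b
  constructor
  · rintro ⟨i, ⟨hi, hic⟩, rfl⟩
    refine ⟨by rw [parity_succ hh]; exact (fun hc => hc hi), ?_⟩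
    exact (hP i hi).2 hic
  · rintro ⟨hb, hbc⟩
    have hpar : Even (b-1).val := (parity_pred hh b).2 hb
    refine ⟨b - 1, ⟨hpar, ?_⟩, by simp⟩
    have := hP (b-1) hpar
    rw [sub_add_cancel] at this
    exact this.1 hbc

lemma shift_odd {h : ℕ} (hh : 1 ≤ h) (P : ℤ × ℤ → Prop) (hP : ∀ i : ZMod (6*h), ¬ Even i.val → (P (ws h (i+1)) ↔ P (ws h i))) :
    (fun i : ZMod (6*h) => i + 1) '' {i | ¬ Even i.val ∧ P (ws h i)} = {i | Even i.val ∧ P (ws h i)} := by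
  ext b
  constructor
  · rintro ⟨i, ⟨hi, hic⟩, rfl⟩
    refine ⟨((parity_succ hh i).2 hi), (hP i hi).2 hic⟩
  · rintro ⟨hb, hbc⟩
    have hpar : ¬ Even (b-1).val := fun hc => ((parity_pred hh b).1 hc) hb
    refine ⟨b - 1, ⟨hpar, ?_⟩, by simp⟩
    have := hP (b-1) hpar
    rw [sub_add_cancel] at this
    exact this.1 hbc

lemma sep_even {h : ℕ} (hh : 1 ≤ h) (P : ℤ × ℤ → Prop) :
    {p ∈ spiralEven (ws h) | P p} = ws h '' {i | Even i.val ∧ P (ws h i)} := by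
  ext p
  simp only [Set.mem_sep_iff, spiralEven, Set.mem_image, Set.mem_setOf_eq]
  constructor
  · rintro ⟨⟨i, hi, rfl⟩, hpc⟩; exact ⟨i, ⟨hi, hpc⟩, rfl⟩
  · rintro ⟨i, ⟨hi, hpc⟩, rfl⟩; exact ⟨⟨i, hi, rfl⟩, hpc⟩

lemma sep_odd {h : ℕ} (hh : 1 ≤ h) (P : ℤ × ℤ → Prop) :
    {p ∈ spiralOdd (ws h) | P p} = ws h '' {i | ¬ Even i.val ∧ P (ws h i)} := by
  ext p
  simp only [Set.mem_sep_iff, spiralOdd, Set.mem_image, Set.mem_setOf_eq]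
  constructor
  · rintro ⟨⟨i, hi, rfl⟩, hpc⟩; exact ⟨i, ⟨hi, hpc⟩, rfl⟩
  · rintro ⟨i, ⟨hi, hpc⟩, rfl⟩; exact ⟨⟨i, hi, rfl⟩, hpc⟩

lemma switching {h : ℕ} (hh : 1 ≤ h) :
    IsHvSwitching (spiralEven (ws h)) (spiralOdd (ws h)) := by
  haveI : NeZero (6*h) := ⟨by omega⟩
  haveI : Fintype (ZMod (6*h)) := ZMod.fintype _
  have hinj := ws_inj hh
  have hinj1 : Function.Injective (fun i : ZMod (6*h) => i + 1) := add_left_injective 1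
  refine ⟨(Set.toFinite _).image (ws h), (Set.toFinite _).image (ws h), ?_, ?_, ?_, ?_⟩
  · rw [Set.disjoint_left]
    rintro p ⟨i, hi, rfl⟩ ⟨i', hi', he⟩
    exact hi' (hinj he ▸ hi)
  · -- ncard
    have h0 : spiralEven (ws h) = ws h '' {i | Even i.val} := rfl
    have h1 : spiralOdd (ws h) = ws h '' {i | ¬ Even i.val} := rfl
    rw [h0, h1, Set.ncard_image_of_injective _ hinj, Set.ncard_image_of_injective _ hinj]
    have himg := shift_even hh (fun _ => True) (fun _ _ => Iff.rfl)
    simp only [and_true] at himg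
    rw [← himg, Set.ncard_image_of_injective _ hinj1]
  · -- hProj
    intro c
    rw [hProj, hProj, sep_even hh (fun p => p.2 = c), sep_odd hh (fun p => p.2 = c),
      Set.ncard_image_of_injective _ hinj, Set.ncard_image_of_injective _ hinj]
    have himg := shift_even hh (fun p => p.2 = c)
      (fun i hi => by show (ws h (i+1)).2 = c ↔ (ws h i).2 = c; rw [(horiz_lem hh i hi).1])
    rw [← himg, Set.ncard_image_of_injective _ hinj1]
  · -- vProj
    intro c
    rw [vProj, vProj, sep_even hh (fun p => p.1 = c), sep_odd hh (fun p => p.1 = c),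
      Set.ncard_image_of_injective _ hinj, Set.ncard_image_of_injective _ hinj]
    have himg := shift_odd hh (fun p => p.1 = c)
      (fun i hi => by show (ws h (i+1)).1 = c ↔ (ws h i).1 = c; rw [(vert_lem hh i hi).1])
    rw [← himg, Set.ncard_image_of_injective _ hinj1]

lemma S0_coords {h : ℕ} (hh : 1 ≤ h) (p : ℤ × ℤ) (hp : p ∈ spiralEven (ws h)) :
    ∃ j : ℕ, j < h ∧ (p = (0, -(j:ℤ)) ∨ p = ((j:ℤ)+1, 1) ∨ p = (-((j:ℤ)+1), (j:ℤ)+2)) := by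
  haveI : NeZero (6*h) := ⟨by omega⟩
  obtain ⟨i, hi, rfl⟩ := hp
  have hv : i.val < 6*h := ZMod.val_lt i
  have hi' : i.val % 2 = 0 := Nat.even_iff.1 hi
  refine ⟨i.val / 6, by omega, ?_⟩
  have hk : i.val % 6 = 0 ∨ i.val % 6 = 2 ∨ i.val % 6 = 4 := by omega
  rcases hk with hk|hk|hk
  · left; rw [ws_coords h i (i.val/6) 0 (by omega) (by omega)]; simp [ptk]
  · right; left; rw [ws_coords h i (i.val/6) 2 (by omega) (by omega)]; simp [ptk]
  · right; right; rw [ws_coords h i (i.val/6) 4 (by omega) (by omega)]; simp [ptk]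

lemma S1_coords {h : ℕ} (hh : 1 ≤ h) (p : ℤ × ℤ) (hp : p ∈ spiralOdd (ws h)) :
    ∃ j : ℕ, j < h ∧ (p = ((j:ℤ)+1, -(j:ℤ)) ∨ p = (-((j:ℤ)+1), 1) ∨ p = (0, (j:ℤ)+2)) := by
  haveI : NeZero (6*h) := ⟨by omega⟩
  obtain ⟨i, hi, rfl⟩ := hp
  have hv : i.val < 6*h := ZMod.val_lt i
  have hi' : i.val % 2 = 1 := Nat.odd_iff.1 (Nat.not_even_iff_odd.1 hi)
  refine ⟨i.val / 6, by omega, ?_⟩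
  have hk : i.val % 6 = 1 ∨ i.val % 6 = 3 ∨ i.val % 6 = 5 := by omega
  rcases hk with hk|hk|hk
  · left; rw [ws_coords h i (i.val/6) 1 (by omega) (by omega)]; simp [ptk]
  · right; left; rw [ws_coords h i (i.val/6) 3 (by omega) (by omega)]; simp [ptk]
  · right; right; rw [ws_coords h i (i.val/6) 5 (by omega) (by omega)]; simp [ptk]

lemma convex0 {h : ℕ} (hh : 1 ≤ h) :
    ∀ x ∈ spiralEven (ws h), ∃ q : Fin 4, Zq q x ∩ spiralOdd (ws h) = ∅ := by
  intro x hx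
  obtain ⟨j, hj, hc⟩ := S0_coords hh x hx
  rcases hc with rfl|rfl|rfl
  · refine ⟨0, Set.eq_empty_iff_forall_notMem.2 ?_⟩
    rintro p ⟨hz, hp⟩
    obtain ⟨j', hj', hc'⟩ := S1_coords hh p hp
    obtain ⟨hz1, hz2⟩ := hz
    rcases hc' with rfl|rfl|rfl <;> simp_all <;> omega
  · refine ⟨2, Set.eq_empty_iff_forall_notMem.2 ?_⟩
    rintro p ⟨hz, hp⟩
    obtain ⟨j', hj', hc'⟩ := S1_coords hh p hp
    obtain ⟨hz1, hz2⟩ := hz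
    rcases hc' with rfl|rfl|rfl <;> simp_all <;> omega
  · refine ⟨3, Set.eq_empty_iff_forall_notMem.2 ?_⟩
    rintro p ⟨hz, hp⟩
    obtain ⟨j', hj', hc'⟩ := S1_coords hh p hp
    obtain ⟨hz1, hz2⟩ := hz
    rcases hc' with rfl|rfl|rfl <;> simp_all <;> omega

lemma convex1 {h : ℕ} (hh : 1 ≤ h) :
    ∀ x ∈ spiralOdd (ws h), ∃ q : Fin 4, Zq q x ∩ spiralEven (ws h) = ∅ := by
  intro x hx
  obtain ⟨j, hj, hc⟩ := S1_coords hh x hx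
  rcases hc with rfl|rfl|rfl
  · refine ⟨1, Set.eq_empty_iff_forall_notMem.2 ?_⟩
    rintro p ⟨hz, hp⟩
    obtain ⟨j', hj', hc'⟩ := S0_coords hh p hp
    obtain ⟨hz1, hz2⟩ := hz
    rcases hc' with rfl|rfl|rfl <;> simp_all <;> omega
  · refine ⟨0, Set.eq_empty_iff_forall_notMem.2 ?_⟩
    rintro p ⟨hz, hp⟩
    obtain ⟨j', hj', hc'⟩ := S0_coords hh p hp
    obtain ⟨hz1, hz2⟩ := hz
    rcases hc' with rfl|rfl|rfl <;> simp_all <;> omega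
  · refine ⟨2, Set.eq_empty_iff_forall_notMem.2 ?_⟩
    rintro p ⟨hz, hp⟩
    obtain ⟨j', hj', hc'⟩ := S0_coords hh p hp
    obtain ⟨hz1, hz2⟩ := hz
    rcases hc' with rfl|rfl|rfl <;> simp_all <;> omega


/-- for every `h ≥ 1` there is a closed squared spiral on `6h` vertices
which is a curl, all of whose maximal runs of consecutive equally-oriented vertices have
length `3` (so the turn-sign sequence consists of exactly `2h` maximal runs, each of
length `3`, i.e. the hv-sequence is `(3,3)_h`), and whose associated pair is an hv-convex
switching. -/
theorem stmt12 (h : ℕ) (hh : 1 ≤ h) :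
    ∃ w : ZMod (6 * h) → ℤ × ℤ, IsClosedSquaredSpiral w ∧ ¬ IsWindow w ∧
      (∀ (a : ZMod (6 * h)) (L : ℕ), 1 ≤ L → L < 6 * h →
        (∀ k : ℕ, k < L → 0 < turn w (a + (k : ZMod (6 * h))) * turn w a) →
        turn w (a - 1) * turn w a < 0 →
        turn w (a + (L : ZMod (6 * h))) * turn w a < 0 → L = 3) ∧
      IsHvConvexSwitching (spiralEven w) (spiralOdd w) := by
  refine ⟨ws h, ⟨⟨3*h, by ring⟩, by omega, ws_inj hh, fun i hi => horiz_lem hh i hi,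
    fun i hi => vert_lem hh i hi⟩, not_window hh,
    fun a L h1 h2 h3 h4 h5 => run_three hh a L h1 h2 h3 h4 h5,
    switching hh, convex0 hh, convex1 hh⟩
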